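/- Assume D satisfies condition (H1) and σ ∈ C²_b(ℝ^d, L(ℝⁿ,ℝ^d)). Let 2 ≤ p < 3, let ω be a control function on [0,T], and let X = (X¹, X²) be a p-rough path over ℝⁿ controlled by ω. Let ε be the constant from the local rough Euler estimate (depending only on σ and C_D), and let Δ = {t_k}_{k=0}^N be a partition of [0,T] with sup_{0 ≤ k ≤ l ≤ N−1} |ω(t_k, t_{l+1}) − ω(t_k, t_l)| ≤ ε/2. Then there exists a constant C > 0, depending only on σ, p and D, such that for every rough Euler approximation (y^Δ, Φ^Δ) starting at y₀ ∈ cl(D) and all 0 ≤ s ≤ t ≤ T: (1) |y^Δ_t − y^Δ_s| ≤ C(1 + ω(0,T)) ω(s,t)^{1/p}, and (2) ‖Φ^Δ‖_{[s,t]} ≤ C(1 + ω(0,T)) ω(s,t)^{1/p}. -/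

import Mathlib

open MeasureTheory Set
open scoped RealInnerProductSpace

noncomputable section

/-- The set of inward unit normal vectors at `x` at radius `r`. -/
def normalVecsAt {d : ℕ} (D : Set (EuclideanSpace ℝ (Fin d)))
    (x : EuclideanSpace ℝ (Fin d)) (r : ℝ) : Set (EuclideanSpace ℝ (Fin d)) :=
  {v | ‖v‖ = 1 ∧ Metric.ball (x - r • v) r ∩ D = ∅}

/-- The set of inward unit normal vectors at `x`. -/
def normalCone {d : ℕ} (D : Set (EuclideanSpace ℝ (Fin d)))
    (x : EuclideanSpace ℝ (Fin d)) : Set (EuclideanSpace ℝ (Fin d)) :=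
  ⋃ r ∈ Set.Ioi (0 : ℝ), normalVecsAt D x r

/-- Condition (A). -/
def CondA {d : ℕ} (D : Set (EuclideanSpace ℝ (Fin d))) (r₀ : ℝ) : Prop :=
  0 < r₀ ∧ ∀ x ∈ frontier D,
    normalCone D x = normalVecsAt D x r₀ ∧ (normalCone D x).Nonempty

/-- Condition (B). -/
def CondB {d : ℕ} (D : Set (EuclideanSpace ℝ (Fin d))) (δ β : ℝ) : Prop :=
  0 < δ ∧ 1 ≤ β ∧ ∀ x ∈ frontier D, ∃ l : EuclideanSpace ℝ (Fin d), ‖l‖ = 1 ∧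
    ∀ y ∈ Metric.ball x δ ∩ frontier D, ∀ v ∈ normalCone D y, 1 / β ≤ ⟪l, v⟫

/-- `‖w‖_{∞,[s,t]}`, the supremum of increments of `w` over `[s,t]`. -/
def supNorm {E : Type*} [NormedAddCommGroup E] (w : ℝ → E) (s t : ℝ) : ℝ :=
  sSup ((fun q : ℝ × ℝ => ‖w q.2 - w q.1‖) '' {q | s ≤ q.1 ∧ q.1 ≤ q.2 ∧ q.2 ≤ t})

/-- `‖φ‖_{[s,t]}`, the total variation of `φ` on `[s,t]`. -/
def totalVar {E : Type*} [NormedAddCommGroup E] (φ : ℝ → E) (s t : ℝ) : ℝ :=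
  (eVariationOn φ (Set.Icc s t)).toReal

/-- A control function on `[0,T]`. -/
structure IsControl (T : ℝ) (ω : ℝ → ℝ → ℝ) : Prop where
  cont : ContinuousOn (fun q : ℝ × ℝ => ω q.1 q.2) {q | 0 ≤ q.1 ∧ q.1 ≤ q.2 ∧ q.2 ≤ T}
  diag : ∀ t, 0 ≤ t → t ≤ T → ω t t = 0
  superadd : ∀ s t u, 0 ≤ s → s ≤ t → t ≤ u → u ≤ T → ω s t + ω t u ≤ ω s u

/-- `(ξ, φ)` is a solution of the Skorohod problem associated with `w` on `[a,b]`. -/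
structure SkorohodSol {d : ℕ} (D : Set (EuclideanSpace ℝ (Fin d))) (a b : ℝ)
    (w ξ φ : ℝ → EuclideanSpace ℝ (Fin d)) : Prop where
  xi_cont : ContinuousOn ξ (Set.Icc a b)
  xi_mem : ∀ t ∈ Set.Icc a b, ξ t ∈ closure D
  phi_cont : ContinuousOn φ (Set.Icc a b)
  phi_bv : BoundedVariationOn φ (Set.Icc a b)
  phi_start : φ a = 0
  eqn : ∀ t ∈ Set.Icc a b, ξ t = w t + φ t
  localTime : ∃ (nv : ℝ → EuclideanSpace ℝ (Fin d)) (μ : Measure ℝ),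
    Measurable nv ∧
    (∀ s ∈ Set.Icc a b, ξ s ∈ frontier D → nv s ∈ normalCone D (ξ s)) ∧
    (∀ u v, a ≤ u → u ≤ v → v ≤ b → μ (Set.Ioc u v) = ENNReal.ofReal (totalVar φ u v)) ∧
    (∀ t ∈ Set.Icc a b,
      φ t = ∫ s in Set.Icc a t, (frontier D).indicator (fun _ => (1 : ℝ)) (ξ s) • nv s ∂μ)

/-- Condition (H1) with constant `C_D`: (A) holds, the Skorohod problem is uniquely
solvable on every subinterval of `[0,T]`, and `‖L(w)‖_{[s,t]} ≤ C_D ‖w‖_{∞,[s,t]}`. -/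
def CondH1 {d : ℕ} (D : Set (EuclideanSpace ℝ (Fin d))) (T C_D : ℝ) : Prop :=
  (∃ r₀, CondA D r₀) ∧ 0 < C_D ∧
  ∀ a b, 0 ≤ a → a ≤ b → b ≤ T →
    ∀ w : ℝ → EuclideanSpace ℝ (Fin d), ContinuousOn w (Set.Icc a b) →
      w a ∈ closure D →
      (∃ ξ φ, SkorohodSol D a b w ξ φ) ∧
      (∀ ξ φ ξ' φ', SkorohodSol D a b w ξ φ → SkorohodSol D a b w ξ' φ' →
        ∀ u ∈ Set.Icc a b, ξ u = ξ' u ∧ φ u = φ' u) ∧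
      (∀ ξ φ, SkorohodSol D a b w ξ φ →
        ∀ s u, a ≤ s → s ≤ u → u ≤ b → totalVar φ s u ≤ C_D * supNorm w s u)

/-- The elementary tensor `a ⊗ b ∈ ℝ^d ⊗ ℝ^n`, realized in `EuclideanSpace ℝ (Fin d × Fin n)`. -/
def outerTensor {d n : ℕ} (a : EuclideanSpace ℝ (Fin d)) (b : EuclideanSpace ℝ (Fin n)) :
    EuclideanSpace ℝ (Fin d × Fin n) :=
  (WithLp.equiv 2 (Fin d × Fin n → ℝ)).symm (fun q => a q.1 * b q.2)

/-- `I` is the (Riemann–Stieltjes/Young) integral `∫_a^b Φ(r) ⊗ dx_r`, the limit of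
left-endpoint Riemann–Stieltjes sums over partitions of `[a,b]` as mesh tends to `0`. -/
def IsRSTensorIntegral {d n : ℕ} (Φ : ℝ → EuclideanSpace ℝ (Fin d))
    (x : ℝ → EuclideanSpace ℝ (Fin n)) (a b : ℝ)
    (I : EuclideanSpace ℝ (Fin d × Fin n)) : Prop :=
  ∀ ε > (0 : ℝ), ∃ η > (0 : ℝ), ∀ (N : ℕ) (t : Fin (N + 1) → ℝ),
    Monotone t → t 0 = a → t (Fin.last N) = b →
    (∀ k : Fin N, t k.succ - t k.castSucc ≤ η) →
    ‖(∑ k : Fin N, outerTensor (Φ (t k.castSucc)) (x (t k.succ) - x (t k.castSucc))) - I‖ ≤ ε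

/-- The bilinear action of `A = Dσ(y) : ℝ^d → L(ℝⁿ, ℝ^d)` on a tensor
`τ ∈ ℝ^d ⊗ ℝⁿ`: `A(a ⊗ b) = (A a) b`, extended linearly. -/
def bilinApply {d n : ℕ}
    (A : EuclideanSpace ℝ (Fin d) →L[ℝ] EuclideanSpace ℝ (Fin n) →L[ℝ] EuclideanSpace ℝ (Fin d))
    (τ : EuclideanSpace ℝ (Fin d × Fin n)) : EuclideanSpace ℝ (Fin d) :=
  ∑ i : Fin d, ∑ j : Fin n,
    τ (i, j) • A (EuclideanSpace.single i 1) (EuclideanSpace.single j 1)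

/-- The action of `S : ℝⁿ → ℝ^d` on the first component of a tensor
`τ ∈ ℝⁿ ⊗ ℝⁿ`: `(S ⊗ id) τ ∈ ℝ^d ⊗ ℝⁿ`. -/
def mapFirst {d n : ℕ}
    (S : EuclideanSpace ℝ (Fin n) →L[ℝ] EuclideanSpace ℝ (Fin d))
    (τ : EuclideanSpace ℝ (Fin n × Fin n)) : EuclideanSpace ℝ (Fin d × Fin n) :=
  (WithLp.equiv 2 (Fin d × Fin n → ℝ)).symm
    (fun q => ∑ j : Fin n, τ (j, q.2) * S (EuclideanSpace.single j 1) q.1)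

/-- `σ` is `C²_b`: twice continuously differentiable and bounded with bounded
derivatives up to order 2. -/
def IsC2b {d n : ℕ}
    (σ : EuclideanSpace ℝ (Fin d) → EuclideanSpace ℝ (Fin n) →L[ℝ] EuclideanSpace ℝ (Fin d)) :
    Prop :=
  ContDiff ℝ 2 σ ∧ (∃ K, ∀ y, ‖σ y‖ ≤ K) ∧ (∃ K, ∀ y, ‖fderiv ℝ σ y‖ ≤ K) ∧
    (∃ K, ∀ y, @norm _ ContinuousLinearMap.hasOpNorm (fderiv ℝ (fderiv ℝ σ) y) ≤ K)

/-- `‖σ‖_∞`, the sup norm of `σ`. -/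
def sigmaSup {d n : ℕ}
    (σ : EuclideanSpace ℝ (Fin d) → EuclideanSpace ℝ (Fin n) →L[ℝ] EuclideanSpace ℝ (Fin d)) :
    ℝ :=
  ⨆ y, ‖σ y‖

/-- `t` is a partition `0 = t_0 < t_1 < ⋯ < t_N = T` of `[0,T]`. -/
def IsPartition (T : ℝ) {N : ℕ} (t : Fin (N + 1) → ℝ) : Prop :=
  StrictMono t ∧ t 0 = 0 ∧ t (Fin.last N) = T

/-- `(X¹, X²)` is a `p`-rough path over `ℝⁿ` on `[0,T]` controlled by `ω`:
both levels are continuous, Chen's identity holds and `|X^i_{s,t}| ≤ ω(s,t)^{i/p}`. -/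
structure IsRoughPath {n : ℕ} (T p : ℝ) (ω : ℝ → ℝ → ℝ)
    (X1 : ℝ → ℝ → EuclideanSpace ℝ (Fin n))
    (X2 : ℝ → ℝ → EuclideanSpace ℝ (Fin n × Fin n)) : Prop where
  cont1 : ContinuousOn (fun q : ℝ × ℝ => X1 q.1 q.2) {q | 0 ≤ q.1 ∧ q.1 ≤ q.2 ∧ q.2 ≤ T}
  cont2 : ContinuousOn (fun q : ℝ × ℝ => X2 q.1 q.2) {q | 0 ≤ q.1 ∧ q.1 ≤ q.2 ∧ q.2 ≤ T}
  chen1 : ∀ s t u, 0 ≤ s → s ≤ t → t ≤ u → u ≤ T → X1 s u = X1 s t + X1 t u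
  chen2 : ∀ s t u, 0 ≤ s → s ≤ t → t ≤ u → u ≤ T →
    X2 s u = X2 s t + X2 t u + outerTensor (X1 s t) (X1 t u)
  bound1 : ∀ s t, 0 ≤ s → s ≤ t → t ≤ T → ‖X1 s t‖ ≤ ω s t ^ (1 / p)
  bound2 : ∀ s t, 0 ≤ s → s ≤ t → t ≤ T → ‖X2 s t‖ ≤ ω s t ^ (2 / p)

/-- `(y, Φ)` is the rough Euler approximation associated with the partition `t`:
on each `[t_{k-1}, t_k]`, `(y, Φ(·) − Φ(t_{k-1}))` solves the Skorohod problem for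
`u ↦ y(t_{k-1}) + σ(y(t_{k-1})) X¹_{t_{k-1},u} + Dσ(y(t_{k-1}))(σ(y(t_{k-1})) X²_{t_{k-1},u})
+ Dσ(y(t_{k-1}))(∫_{t_{k-1}}^u (Φ(r) − Φ(t_{k-1})) ⊗ dx_r)`, where `x_r = X¹_{0,r}`. -/
def IsRoughEuler {d n : ℕ} (D : Set (EuclideanSpace ℝ (Fin d)))
    (σ : EuclideanSpace ℝ (Fin d) → EuclideanSpace ℝ (Fin n) →L[ℝ] EuclideanSpace ℝ (Fin d))
    (X1 : ℝ → ℝ → EuclideanSpace ℝ (Fin n))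
    (X2 : ℝ → ℝ → EuclideanSpace ℝ (Fin n × Fin n))
    {N : ℕ} (t : Fin (N + 1) → ℝ)
    (y Φ : ℝ → EuclideanSpace ℝ (Fin d)) (y₀ : EuclideanSpace ℝ (Fin d)) : Prop :=
  y (t 0) = y₀ ∧ Φ (t 0) = 0 ∧
  ∀ k : Fin N, ∃ Z : ℝ → EuclideanSpace ℝ (Fin d × Fin n),
    (∀ u ∈ Set.Icc (t k.castSucc) (t k.succ),
      IsRSTensorIntegral (fun r => Φ r - Φ (t k.castSucc)) (fun r => X1 0 r)
        (t k.castSucc) u (Z u)) ∧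
    SkorohodSol D (t k.castSucc) (t k.succ)
      (fun u => y (t k.castSucc) + σ (y (t k.castSucc)) (X1 (t k.castSucc) u) +
        bilinApply (fderiv ℝ σ (y (t k.castSucc)))
          (mapFirst (σ (y (t k.castSucc))) (X2 (t k.castSucc) u)) +
        bilinApply (fderiv ℝ σ (y (t k.castSucc))) (Z u))
      y (fun u => Φ u - Φ (t k.castSucc))

/-- The local rough Euler estimate with constant `ε` holds on `[0,T]` for the domain
`D`, the coefficient `σ` and the constant `C_D`: whenever `t_k ≤ s ≤ t` and
`ω(t_k,t) ≤ ε`, one has `‖Φ^Δ‖_{[s,t]} ≤ 2C_D‖σ‖_∞ ω(s,t)^{1/p}` and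
`|y^Δ_t − y^Δ_s| ≤ (1 + 2C_D‖σ‖_∞ + ‖σ‖_∞) ω(s,t)^{1/p}`. -/
def LocalRoughEstimate {d n : ℕ} (D : Set (EuclideanSpace ℝ (Fin d))) (T : ℝ)
    (σ : EuclideanSpace ℝ (Fin d) → EuclideanSpace ℝ (Fin n) →L[ℝ] EuclideanSpace ℝ (Fin d))
    (p C_D ε : ℝ) : Prop :=
  ∀ ω : ℝ → ℝ → ℝ, IsControl T ω →
  ∀ (X1 : ℝ → ℝ → EuclideanSpace ℝ (Fin n))
    (X2 : ℝ → ℝ → EuclideanSpace ℝ (Fin n × Fin n)),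
    IsRoughPath T p ω X1 X2 →
  ∀ (N : ℕ) (tt : Fin (N + 1) → ℝ), IsPartition T tt →
  ∀ (y Φ : ℝ → EuclideanSpace ℝ (Fin d)) (y₀ : EuclideanSpace ℝ (Fin d)),
    y₀ ∈ closure D → IsRoughEuler D σ X1 X2 tt y Φ y₀ →
  ∀ (k : Fin (N + 1)) (s t : ℝ), tt k ≤ s → s ≤ t → t ≤ T → ω (tt k) t ≤ ε →
    totalVar Φ s t ≤ 2 * C_D * sigmaSup σ * ω s t ^ (1 / p) ∧
    ‖y t - y s‖ ≤ (1 + 2 * C_D * sigmaSup σ + sigmaSup σ) * ω s t ^ (1 / p)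


section Aux

theorem evar_shift {E : Type*} [NormedAddCommGroup E] (f : ℝ → E) (c : E) (s : Set ℝ) :
    eVariationOn (fun x => f x - c) s = eVariationOn f s := by
  have h : ∀ a b : E, edist (a - c) (b - c) = edist a b := by
    intro a b; simp [edist_dist, dist_eq_norm, sub_sub_sub_cancel_right]
  simp only [eVariationOn, h]

theorem totalVar_self {E : Type*} [NormedAddCommGroup E] (φ : ℝ → E) (a : ℝ) :
    totalVar φ a a = 0 := by
  unfold totalVar
  rw [Set.Icc_self, eVariationOn.subsingleton φ Set.subsingleton_singleton]
  simp

theorem totalVar_nonneg {E : Type*} [NormedAddCommGroup E] (φ : ℝ → E) (a b : ℝ) :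
    0 ≤ totalVar φ a b := ENNReal.toReal_nonneg

end Aux

set_option maxHeartbeats 2000000 in
/-- Lemma 4.5: global estimates for the rough Euler approximation,
on partitions whose `ω`-mesh is at most `ε/2`, where `ε` is the constant of the local
rough Euler estimate.  The constant `C` depends only on `σ`, `p` and `D`. -/
theorem rough_euler_global_estimate {d n : ℕ} (D : Set (EuclideanSpace ℝ (Fin d)))
    (T p C_D ε : ℝ) (hT : 0 ≤ T) (hp : 2 ≤ p) (hp3 : p < 3)
    (σ : EuclideanSpace ℝ (Fin d) → EuclideanSpace ℝ (Fin n) →L[ℝ] EuclideanSpace ℝ (Fin d))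
    (hσ : IsC2b σ) (hH1 : CondH1 D T C_D)
    (hε : 0 < ε) (hε1 : ε ≤ 1) (hLE : LocalRoughEstimate D T σ p C_D ε) :
    ∃ C : ℝ, 0 < C ∧
      ∀ ω : ℝ → ℝ → ℝ, IsControl T ω →
      ∀ (X1 : ℝ → ℝ → EuclideanSpace ℝ (Fin n))
        (X2 : ℝ → ℝ → EuclideanSpace ℝ (Fin n × Fin n)),
        IsRoughPath T p ω X1 X2 →
      ∀ (N : ℕ) (tt : Fin (N + 1) → ℝ), IsPartition T tt →
        (∀ (k : Fin (N + 1)) (l : Fin N), (k : ℕ) ≤ (l : ℕ) →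
          |ω (tt k) (tt l.succ) - ω (tt k) (tt l.castSucc)| ≤ ε / 2) →
      ∀ (y Φ : ℝ → EuclideanSpace ℝ (Fin d)) (y₀ : EuclideanSpace ℝ (Fin d)),
        y₀ ∈ closure D → IsRoughEuler D σ X1 X2 tt y Φ y₀ →
      ∀ s t, 0 ≤ s → s ≤ t → t ≤ T →
        ‖y t - y s‖ ≤ C * (1 + ω 0 T) * ω s t ^ (1 / p) ∧
        totalVar Φ s t ≤ C * (1 + ω 0 T) * ω s t ^ (1 / p) := by
  classical
  obtain ⟨-, hCD, -⟩ := hH1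
  have hp0 : (0:ℝ) < p := by linarith
  have hp1 : (0:ℝ) < 1/p := by positivity
  set K := sigmaSup σ with hKdef
  have hK0 : 0 ≤ K := Real.iSup_nonneg fun y => norm_nonneg _
  set A : ℝ := 1 + 2 * C_D * K + K with hAdef
  set B : ℝ := 2 * C_D * K with hBdef
  have hB0 : 0 ≤ B := by positivity
  have hA1 : 1 ≤ A := by simp only [hAdef]; linarith
  have hA0 : 0 ≤ A := by linarith
  have hq2 : (2:ℝ) ≤ 4/ε := by rw [le_div_iff₀ hε]; linarith
  have hq0 : (0:ℝ) ≤ 4/ε := by positivity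
  refine ⟨(A + B) * (4/ε), by positivity, ?_⟩
  intro ω hω X1 X2 hX N tt hpart hmesh y Φ y₀ hy₀ hEuler s t hs hst htT
  -- basic facts about ω
  have hw0 : ∀ a b : ℝ, 0 ≤ a → a ≤ b → b ≤ T → 0 ≤ ω a b := by
    intro a b ha hab hbT
    by_contra hcon; push_neg at hcon
    have h2 := hX.bound2 a b ha hab hbT
    have hneg : ω a b ^ (2/p) < 0 := by
      rcases eq_or_lt_of_le hp with hp2 | hp2
      · rw [← hp2]
        norm_num
        linarith
      · rw [Real.rpow_def_of_neg hcon]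
        have hq1 : 2/p < 1 := (div_lt_one hp0).mpr (by linarith)
        have hq3 : 1/2 < 2/p := by rw [lt_div_iff₀ hp0]; linarith
        have hc : Real.cos (2/p * Real.pi) < 0 := by
          apply Real.cos_neg_of_pi_div_two_lt_of_lt
          · nlinarith [Real.pi_pos]
          · nlinarith [Real.pi_pos]
        exact mul_neg_of_pos_of_neg (Real.exp_pos _) hc
    linarith [norm_nonneg (X2 a b)]
  have hwmono : ∀ a a' b b' : ℝ, 0 ≤ a' → a' ≤ a → a ≤ b → b ≤ b' → b' ≤ T →
      ω a b ≤ ω a' b' := by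
    intro a a' b b' ha' h1 h2 h3 h4
    have s1 := hω.superadd a' a b ha' h1 h2 (by linarith)
    have s2 := hω.superadd a' b b' ha' (by linarith) h3 h4
    have n1 := hw0 a' a ha' h1 (by linarith)
    have n2 := hw0 b b' (by linarith) h3 h4
    linarith
  -- the capped partition sequence
  set u : ℕ → ℝ := fun j => tt ⟨min j N, by omega⟩ with hudef
  have hufin : ∀ (j : ℕ) (h : j ≤ N), u j = tt ⟨j, by omega⟩ := by
    intro j h
    simp only [hudef]
    congr 1
    exact Fin.ext (by simpa using Nat.min_eq_left h)
  have hu_mono : Monotone u := by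
    intro a b hab
    exact (hpart.1.monotone) (by simp only [Fin.mk_le_mk]; omega)
  have hu0 : u 0 = 0 := by
    rw [hufin 0 (Nat.zero_le N)]
    have e : (⟨0, by omega⟩ : Fin (N+1)) = 0 := Fin.ext (by simp)
    rw [e]; exact hpart.2.1
  have huN : ∀ j : ℕ, N ≤ j → u j = T := by
    intro j hj
    have : u j = tt ⟨N, by omega⟩ := by
      simp only [hudef]; congr 1; exact Fin.ext (by simpa using Nat.min_eq_right hj)
    rw [this]
    exact hpart.2.2
  have hu_rng : ∀ j : ℕ, 0 ≤ u j ∧ u j ≤ T := by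
    intro j
    constructor
    · rw [← hu0]; exact hu_mono (Nat.zero_le j)
    · rw [← huN (max j N) (le_max_right j N)]; exact hu_mono (le_max_left j N)
  -- mesh condition in ℕ form
  have hmeshu : ∀ k l : ℕ, k ≤ l → |ω (u k) (u (l+1)) - ω (u k) (u l)| ≤ ε/2 := by
    intro k l hkl
    rcases lt_or_ge l N with hl | hl
    · have hm := hmesh ⟨k, by omega⟩ ⟨l, hl⟩ hkl
      have e1 := hufin k (by omega)
      have e2 := hufin l (by omega)
      have e3 := hufin (l+1) (by omega)
      rw [e1, e2, e3]
      exact hm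
    · have e : u (l+1) = u l := by rw [huN (l+1) (by omega), huN l hl]
      rw [e, sub_self, abs_zero]; linarith
  have hstep : ∀ k : ℕ, ω (u k) (u (k+1)) ≤ ε/2 := by
    intro k
    have h := hmeshu k k le_rfl
    rw [hω.diag (u k) (hu_rng k).1 (hu_rng k).2, sub_zero] at h
    exact le_of_abs_le h
  -- local estimate, ℕ-anchored
  have hloc := hLE ω hω X1 X2 hX N tt hpart y Φ y₀ hy₀ hEuler
  have hlocu : ∀ (j : ℕ) (a b : ℝ), u j ≤ a → a ≤ b → b ≤ T → ω (u j) b ≤ ε →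
      totalVar Φ a b ≤ B * ω a b ^ (1/p) ∧ ‖y b - y a‖ ≤ A * ω a b ^ (1/p) := by
    intro j a b h1 h2 h3 h4
    exact hloc ⟨min j N, by omega⟩ a b h1 h2 h3 h4
  -- bounded variation of Φ
  have hvar_shift : ∀ (k : Fin N),
      eVariationOn Φ (Icc (tt k.castSucc) (tt k.succ)) ≠ ⊤ := by
    intro k
    obtain ⟨Z, hZ, hsol⟩ := hEuler.2.2 k
    have hbv := hsol.phi_bv
    unfold BoundedVariationOn at hbv
    rwa [evar_shift] at hbv
  have hfin : ∀ j : ℕ, eVariationOn Φ (Icc 0 (u j)) ≠ ⊤ := by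
    intro j
    induction j with
    | zero =>
      rw [hu0, Set.Icc_self, eVariationOn.subsingleton Φ Set.subsingleton_singleton]
      exact ENNReal.zero_ne_top
    | succ j ih =>
      rcases le_or_gt N j with hj | hj
      · rw [show u (j+1) = u j from by rw [huN (j+1) (by omega), huN j hj]]
        exact ih
      · have key := eVariationOn.Icc_add_Icc Φ (s := univ)
          (hu_rng j).1 (hu_mono (by omega : j ≤ j+1)) (mem_univ (u j))
        simp only [univ_inter] at key
        rw [← key]
        refine ENNReal.add_ne_top.mpr ⟨ih, ?_⟩
        have hbv := hvar_shift ⟨j, hj⟩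
        have e2 : tt (⟨j, hj⟩ : Fin N).castSucc = u j := (hufin j (by omega)).symm
        have e3 : tt (⟨j, hj⟩ : Fin N).succ = u (j+1) := (hufin (j+1) (by omega)).symm
        rwa [e2, e3] at hbv
  have hfinT : eVariationOn Φ (Icc 0 T) ≠ ⊤ := by
    have h := hfin N; rwa [huN N le_rfl] at h
  have hfin' : ∀ a b : ℝ, 0 ≤ a → b ≤ T → eVariationOn Φ (Icc a b) ≠ ⊤ := by
    intro a b ha hb
    exact ne_top_of_le_ne_top hfinT (eVariationOn.mono Φ (Icc_subset_Icc ha hb))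
  have hvadd : ∀ a b c : ℝ, 0 ≤ a → a ≤ b → b ≤ c → c ≤ T →
      totalVar Φ a c = totalVar Φ a b + totalVar Φ b c := by
    intro a b c h1 h2 h3 h4
    have key := eVariationOn.Icc_add_Icc Φ (s := univ) h2 h3 (mem_univ b)
    simp only [univ_inter] at key
    unfold totalVar
    rw [← key, ENNReal.toReal_add (hfin' a b h1 (by linarith)) (hfin' b c (by linarith) h4)]
  -- core induction over blocks
  have hQ : ∀ m : ℕ, ∀ j : ℕ, ∀ b : ℝ, u j ≤ b → b ≤ T → b ≤ u (j + m) →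
      ‖y b - y (u j)‖ ≤ A * (1 + 4 * ω (u j) b / ε) * ω (u j) b ^ (1/p) ∧
      totalVar Φ (u j) b ≤ B * (1 + 4 * ω (u j) b / ε) * ω (u j) b ^ (1/p) := by
    intro m
    induction m with
    | zero =>
      intro j b h1 h2 h3
      obtain rfl : b = u j := le_antisymm h3 h1
      rw [hω.diag (u j) (hu_rng j).1 (hu_rng j).2, Real.zero_rpow (by positivity)]
      simp only [mul_zero]
      exact ⟨by simp, le_of_eq (totalVar_self Φ (u j))⟩
    | succ m ih =>
      intro j b h1 h2 h3
      have hW0 : 0 ≤ ω (u j) b := hw0 _ _ (hu_rng j).1 h1 h2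
      have hrW : 0 ≤ ω (u j) b ^ (1/p) := Real.rpow_nonneg hW0 _
      by_cases hle : ω (u j) b ≤ ε
      · obtain ⟨hv, hy⟩ := hlocu j (u j) b le_rfl h1 h2 hle
        have hco : (0:ℝ) ≤ 4 * ω (u j) b / ε := by positivity
        constructor
        · refine le_trans hy ?_
          have := mul_le_mul_of_nonneg_right
            (mul_le_mul_of_nonneg_left (by linarith : (1:ℝ) ≤ 1 + 4 * ω (u j) b / ε) hA0) hrW
          simpa using this
        · refine le_trans hv ?_
          have := mul_le_mul_of_nonneg_right
            (mul_le_mul_of_nonneg_left (by linarith : (1:ℝ) ≤ 1 + 4 * ω (u j) b / ε) hB0) hrW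
          simpa using this
      · push_neg at hle
        have hjN : j < N := by
          by_contra hcon; push_neg at hcon
          have hT' : u j = T := huN j hcon
          have hbj : b = u j := le_antisymm (hT' ▸ h2) h1
          rw [hbj, hω.diag (u j) (hu_rng j).1 (hu_rng j).2] at hle
          linarith
        set P : ℕ → Prop := fun i => ω (u j) (u (j + i)) ≤ ε with hPdef
        have hP1 : P 1 := le_trans (hstep j) (by linarith)
        have hPm : ¬ P (m+1) := by
          intro hcon
          have : ω (u j) b ≤ ω (u j) (u (j + (m+1))) :=
            hwmono _ _ _ _ (hu_rng j).1 le_rfl h1 h3 (hu_rng _).2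
          exact absurd hcon (by simp only [hPdef]; push_neg; linarith)
        set c := Nat.findGreatest P (m+1) with hcdef
        have hc1 : 1 ≤ c := Nat.le_findGreatest (by omega) hP1
        have hcP : P c := Nat.findGreatest_spec (by omega : 1 ≤ m+1) hP1
        have hcm : c ≤ m := by
          have hcle : c ≤ m + 1 := Nat.findGreatest_le (m+1)
          rcases eq_or_lt_of_le hcle with hceq | h
          · exact absurd (hceq ▸ hcP) hPm
          · omega
        have hnc : ¬ P (c+1) := Nat.findGreatest_is_greatest (by rw [← hcdef]; omega) (by omega)
        have hnc' : ε < ω (u j) (u (j + c + 1)) := by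
          rw [show j + c + 1 = j + (c+1) from by omega]
          simpa only [hPdef, not_le] using hnc
        have hm2 := hmeshu j (j+c) (by omega)
        have hhalf : ε/2 < ω (u j) (u (j+c)) := by
          have habs := abs_le.mp hm2
          linarith [habs.2]
        have hcP' : ω (u j) (u (j + c)) ≤ ε := hcP
        have hub : u (j+c) ≤ b := by
          by_contra hcon; push_neg at hcon
          have : ω (u j) b ≤ ω (u j) (u (j+c)) :=
            hwmono _ _ _ _ (hu_rng j).1 le_rfl h1 hcon.le (hu_rng _).2
          linarith
        have hsup := hω.superadd (u j) (u (j+c)) b (hu_rng j).1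
          (hu_mono (by omega : j ≤ j + c)) hub h2
        have hW20 : 0 ≤ ω (u (j+c)) b := hw0 _ _ (hu_rng _).1 hub h2
        have hW10 : 0 ≤ ω (u j) (u (j+c)) := by linarith
        have hW2W : ω (u (j+c)) b ≤ ω (u j) b := by linarith
        have hW1W : ω (u j) (u (j+c)) ≤ ω (u j) b := by linarith
        obtain ⟨hv1, hy1⟩ := hlocu j (u j) (u (j+c)) le_rfl
          (hu_mono (by omega : j ≤ j + c)) (hu_rng _).2 hcP'
        obtain ⟨hy2, hv2⟩ := ih (j+c) b hub h2
          (le_trans h3 (hu_mono (by omega : j + (m+1) ≤ j + c + m)))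
        have hr1 : ω (u j) (u (j+c)) ^ (1/p) ≤ ω (u j) b ^ (1/p) :=
          Real.rpow_le_rpow hW10 hW1W (by positivity)
        have hr2 : ω (u (j+c)) b ^ (1/p) ≤ ω (u j) b ^ (1/p) :=
          Real.rpow_le_rpow hW20 hW2W (by positivity)
        have hcoef : 2 + 4 * ω (u (j+c)) b / ε ≤ 1 + 4 * ω (u j) b / ε := by
          have hd : (2:ℝ) ≤ 4 * (ω (u j) b - ω (u (j+c)) b) / ε := by
            rw [le_div_iff₀ hε]; linarith
          have he : 4 * (ω (u j) b - ω (u (j+c)) b) / ε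
              = 4 * ω (u j) b / ε - 4 * ω (u (j+c)) b / ε := by ring
          linarith
        have hco2 : (0:ℝ) ≤ 1 + 4 * ω (u (j+c)) b / ε := by positivity
        constructor
        · have tri : ‖y b - y (u j)‖ ≤ ‖y (u (j+c)) - y (u j)‖ + ‖y b - y (u (j+c))‖ := by
            have hsplit : y b - y (u j) = (y (u (j+c)) - y (u j)) + (y b - y (u (j+c))) := by
              abel
            rw [hsplit]; exact norm_add_le _ _
          have e1 : A * ω (u j) (u (j+c)) ^ (1/p) ≤ A * ω (u j) b ^ (1/p) :=
            mul_le_mul_of_nonneg_left hr1 hA0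
          have e2 : A * (1 + 4 * ω (u (j+c)) b / ε) * ω (u (j+c)) b ^ (1/p)
              ≤ A * (1 + 4 * ω (u (j+c)) b / ε) * ω (u j) b ^ (1/p) :=
            mul_le_mul_of_nonneg_left hr2 (mul_nonneg hA0 hco2)
          have e3 : A * ω (u j) b ^ (1/p) + A * (1 + 4 * ω (u (j+c)) b / ε) * ω (u j) b ^ (1/p)
              ≤ A * (1 + 4 * ω (u j) b / ε) * ω (u j) b ^ (1/p) := by
            have hc2 : A * (2 + 4 * ω (u (j+c)) b / ε) ≤ A * (1 + 4 * ω (u j) b / ε) :=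
              mul_le_mul_of_nonneg_left hcoef hA0
            calc A * ω (u j) b ^ (1/p) + A * (1 + 4 * ω (u (j+c)) b / ε) * ω (u j) b ^ (1/p)
                = A * (2 + 4 * ω (u (j+c)) b / ε) * ω (u j) b ^ (1/p) := by ring
              _ ≤ A * (1 + 4 * ω (u j) b / ε) * ω (u j) b ^ (1/p) :=
                  mul_le_mul_of_nonneg_right hc2 hrW
          linarith
        · have hsplitv : totalVar Φ (u j) b
              = totalVar Φ (u j) (u (j+c)) + totalVar Φ (u (j+c)) b :=
            hvadd _ _ _ (hu_rng j).1 (hu_mono (by omega : j ≤ j + c)) hub h2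
          have e1 : B * ω (u j) (u (j+c)) ^ (1/p) ≤ B * ω (u j) b ^ (1/p) :=
            mul_le_mul_of_nonneg_left hr1 hB0
          have e2 : B * (1 + 4 * ω (u (j+c)) b / ε) * ω (u (j+c)) b ^ (1/p)
              ≤ B * (1 + 4 * ω (u (j+c)) b / ε) * ω (u j) b ^ (1/p) :=
            mul_le_mul_of_nonneg_left hr2 (mul_nonneg hB0 hco2)
          have e3 : B * ω (u j) b ^ (1/p) + B * (1 + 4 * ω (u (j+c)) b / ε) * ω (u j) b ^ (1/p)
              ≤ B * (1 + 4 * ω (u j) b / ε) * ω (u j) b ^ (1/p) := by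
            have hc2 : B * (2 + 4 * ω (u (j+c)) b / ε) ≤ B * (1 + 4 * ω (u j) b / ε) :=
              mul_le_mul_of_nonneg_left hcoef hB0
            calc B * ω (u j) b ^ (1/p) + B * (1 + 4 * ω (u (j+c)) b / ε) * ω (u j) b ^ (1/p)
                = B * (2 + 4 * ω (u (j+c)) b / ε) * ω (u j) b ^ (1/p) := by ring
              _ ≤ B * (1 + 4 * ω (u j) b / ε) * ω (u j) b ^ (1/p) :=
                  mul_le_mul_of_nonneg_right hc2 hrW
          linarith
  -- final assembly
  have hω0T : 0 ≤ ω 0 T := hw0 0 T le_rfl hT le_rfl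
  have hWst : 0 ≤ ω s t := hw0 s t hs hst htT
  have hrst : 0 ≤ ω s t ^ (1/p) := Real.rpow_nonneg hWst _
  set c0 := Nat.findGreatest (fun i => u i ≤ s) N with hc0def
  have hc0le : c0 ≤ N := Nat.findGreatest_le N
  have huc0 : u c0 ≤ s := Nat.findGreatest_spec (P := fun i => u i ≤ s) (Nat.zero_le N) (show u 0 ≤ s by rw [hu0]; exact hs)
  have hone : (1:ℝ) ≤ (4/ε) * (1 + ω 0 T) := by
    calc (1:ℝ) = 1 * 1 := by ring
      _ ≤ (4/ε) * (1 + ω 0 T) := mul_le_mul (by linarith) (by linarith) one_pos.le hq0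
  have hmulAB : (A + B) * 1 ≤ (A + B) * ((4/ε) * (1 + ω 0 T)) :=
    mul_le_mul_of_nonneg_left hone (by linarith)
  have heAB : (A + B) * ((4/ε) * (1 + ω 0 T)) = (A + B) * (4/ε) * (1 + ω 0 T) := by ring
  have hCA : A ≤ (A + B) * (4/ε) * (1 + ω 0 T) := by
    have h1 : A ≤ (A + B) * 1 := by linarith
    linarith
  have hCB : B ≤ (A + B) * (4/ε) * (1 + ω 0 T) := by
    have h1 : B ≤ (A + B) * 1 := by linarith
    linarith
  rcases eq_or_lt_of_le hc0le with hc0N | hc0N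
  · -- s = t = T
    have hTs : T ≤ s := by rw [← huN c0 (le_of_eq hc0N.symm)]; exact huc0
    obtain rfl : s = t := le_antisymm hst (by linarith)
    rw [hω.diag s hs htT, Real.zero_rpow (by positivity), mul_zero]
    exact ⟨by simp, by rw [totalVar_self]⟩
  · have hns : ¬ (u (c0+1) ≤ s) :=
      Nat.findGreatest_is_greatest (by omega : c0 < c0 + 1) (by omega)
    push_neg at hns
    rcases le_or_gt t (u (c0+1)) with hcase | hcase
    · -- single block
      have hωt : ω (u c0) t ≤ ε := by
        have h1 : ω (u c0) t ≤ ω (u c0) (u (c0+1)) :=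
          hwmono _ _ _ _ (hu_rng c0).1 le_rfl (le_trans huc0 (le_trans hst le_rfl))
            hcase (hu_rng _).2
        linarith [hstep c0]
      obtain ⟨hv1, hy1⟩ := hlocu c0 s t huc0 hst htT hωt
      constructor
      · exact le_trans hy1 (mul_le_mul_of_nonneg_right hCA hrst)
      · exact le_trans hv1 (mul_le_mul_of_nonneg_right hCB hrst)
    · -- two blocks
      have hv_le_t : u (c0+1) ≤ t := hcase.le
      have hω1 : ω (u c0) (u (c0+1)) ≤ ε := by linarith [hstep c0]
      obtain ⟨hv1, hy1⟩ := hlocu c0 s (u (c0+1)) huc0 hns.le ((hu_rng (c0+1)).2) hω1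
      obtain ⟨hy2, hv2⟩ := hQ N (c0+1) t hv_le_t htT
        (by rw [huN (c0+1+N) (by omega)]; exact htT)
      have hWvt0 : 0 ≤ ω (u (c0+1)) t := hw0 _ _ (hu_rng _).1 hv_le_t htT
      have hle0T : ω (u (c0+1)) t ≤ ω 0 T :=
        hwmono _ _ _ _ le_rfl (hu_rng _).1 hv_le_t htT le_rfl
      have hsv_le : ω s (u (c0+1)) ≤ ω s t :=
        hwmono _ _ _ _ hs le_rfl hns.le hv_le_t htT
      have hsv0 : 0 ≤ ω s (u (c0+1)) := hw0 _ _ hs hns.le (hu_rng _).2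
      have hrv : ω s (u (c0+1)) ^ (1/p) ≤ ω s t ^ (1/p) :=
        Real.rpow_le_rpow hsv0 hsv_le (by positivity)
      have hlest : ω (u (c0+1)) t ≤ ω s t :=
        hwmono _ _ _ _ hs hns.le hv_le_t le_rfl htT
      have hrvt : ω (u (c0+1)) t ^ (1/p) ≤ ω s t ^ (1/p) :=
        Real.rpow_le_rpow hWvt0 hlest (by positivity)
      have hrvt0 : 0 ≤ ω (u (c0+1)) t ^ (1/p) := Real.rpow_nonneg hWvt0 _
      have hdd : 4 * ω (u (c0+1)) t / ε ≤ 4 * ω 0 T / ε := by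
        gcongr
      have hbig : ∀ G : ℝ, 0 ≤ G → G ≤ A + B →
          G * (2 + 4 * ω 0 T / ε) ≤ (A + B) * (4/ε) * (1 + ω 0 T) := by
        intro G hG0 hGle
        have hco0 : (0:ℝ) ≤ 2 + 4 * ω 0 T / ε := by positivity
        have h1 : G * (2 + 4 * ω 0 T / ε) ≤ (A + B) * (2 + 4 * ω 0 T / ε) :=
          mul_le_mul_of_nonneg_right hGle hco0
        have hcc : 2 + 4 * ω 0 T / ε ≤ (4/ε) * (1 + ω 0 T) := by
          have he : (4/ε) * (1 + ω 0 T) = 4/ε + 4 * ω 0 T / ε := by ring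
          linarith
        have h2 : (A + B) * (2 + 4 * ω 0 T / ε) ≤ (A + B) * ((4/ε) * (1 + ω 0 T)) :=
          mul_le_mul_of_nonneg_left hcc (by linarith)
        have he2 : (A + B) * ((4/ε) * (1 + ω 0 T)) = (A + B) * (4/ε) * (1 + ω 0 T) := by ring
        linarith
      have hcf : ∀ G : ℝ, 0 ≤ G →
          G * (1 + 4 * ω (u (c0+1)) t / ε) ≤ G * (1 + 4 * ω 0 T / ε) := by
        intro G hG0
        exact mul_le_mul_of_nonneg_left (by linarith) hG0
      constructor
      · have tri : ‖y t - y s‖ ≤ ‖y (u (c0+1)) - y s‖ + ‖y t - y (u (c0+1))‖ := by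
          have hsplit : y t - y s = (y (u (c0+1)) - y s) + (y t - y (u (c0+1))) := by abel
          rw [hsplit]; exact norm_add_le _ _
        have e1 : A * ω s (u (c0+1)) ^ (1/p) ≤ A * ω s t ^ (1/p) :=
          mul_le_mul_of_nonneg_left hrv hA0
        have e2 : A * (1 + 4 * ω (u (c0+1)) t / ε) * ω (u (c0+1)) t ^ (1/p)
            ≤ A * (1 + 4 * ω 0 T / ε) * ω s t ^ (1/p) :=
          mul_le_mul (hcf A hA0) hrvt hrvt0 (mul_nonneg hA0 (by positivity))
        have e3 : A * ω s t ^ (1/p) + A * (1 + 4 * ω 0 T / ε) * ω s t ^ (1/p)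
            ≤ (A + B) * (4/ε) * (1 + ω 0 T) * ω s t ^ (1/p) := by
          have := mul_le_mul_of_nonneg_right (hbig A hA0 (by linarith)) hrst
          calc A * ω s t ^ (1/p) + A * (1 + 4 * ω 0 T / ε) * ω s t ^ (1/p)
              = A * (2 + 4 * ω 0 T / ε) * ω s t ^ (1/p) := by ring
            _ ≤ (A + B) * (4/ε) * (1 + ω 0 T) * ω s t ^ (1/p) := this
        linarith
      · have hsplitv : totalVar Φ s t
            = totalVar Φ s (u (c0+1)) + totalVar Φ (u (c0+1)) t :=
          hvadd _ _ _ hs hns.le hv_le_t htT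
        have e1 : B * ω s (u (c0+1)) ^ (1/p) ≤ B * ω s t ^ (1/p) :=
          mul_le_mul_of_nonneg_left hrv hB0
        have e2 : B * (1 + 4 * ω (u (c0+1)) t / ε) * ω (u (c0+1)) t ^ (1/p)
            ≤ B * (1 + 4 * ω 0 T / ε) * ω s t ^ (1/p) :=
          mul_le_mul (hcf B hB0) hrvt hrvt0 (mul_nonneg hB0 (by positivity))
        have e3 : B * ω s t ^ (1/p) + B * (1 + 4 * ω 0 T / ε) * ω s t ^ (1/p)
            ≤ (A + B) * (4/ε) * (1 + ω 0 T) * ω s t ^ (1/p) := by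
          have := mul_le_mul_of_nonneg_right (hbig B hB0 (by linarith)) hrst
          calc B * ω s t ^ (1/p) + B * (1 + 4 * ω 0 T / ε) * ω s t ^ (1/p)
              = B * (2 + 4 * ω 0 T / ε) * ω s t ^ (1/p) := by ring
            _ ≤ (A + B) * (4/ε) * (1 + ω 0 T) * ω s t ^ (1/p) := this
        linarith


end
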